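/- (Theorem 1, sublinear convergence rate.) Under Assumption A, set c := min{γ/2 − 3L/2 − Lδτ, ρ/2 − Lτ/δ} > 0 and μ := 2(2 + ρ)² + 8L²(τ + 1)². For any ε > 0, if T ∈ ℕ is such that the squared optimality gap satisfies ‖∇̃𝓛(x^t)‖² ≥ ε for all 0 ≤ t < T, then T · ε ≤ (μ/c)(F(x^1, x^0) − L̲); hence the first time T(ε) at which ‖∇̃𝓛(x^t)‖² drops below ε satisfies T(ε) ≤ (μ/c)(F(x^1, x^0) − L̲)/ε + 1, so the optimality gap converges to 0 at a sublinear rate. -/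

import Mathlib

open scoped RealInnerProductSpace

variable {E : Type*} [NormedAddCommGroup E] [InnerProductSpace ℝ E]

/-- small-λ limit trick -/
lemma aux_limA {A B : ℝ} (hl : ∀ l : ℝ, 0 < l → l ≤ 1 → 0 ≤ l * A + l ^ 2 * B) : 0 ≤ A := by
  by_contra hA
  push_neg at hA
  rcases le_or_gt B 0 with hB | hB
  · nlinarith [hl 1 one_pos le_rfl]
  · have hpos : 0 < -A / (2 * B) := by
      apply div_pos (by linarith) (by linarith)
    have h1 := hl (min 1 (-A / (2 * B))) (lt_min one_pos hpos) (min_le_left _ _)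
    set l := min 1 (-A / (2 * B)) with hldef
    have hl1 : l ≤ -A / (2 * B) := min_le_right _ _
    have hlpos : 0 < l := lt_min one_pos hpos
    have : l * B ≤ -A / 2 := by
      rw [le_div_iff₀ (by linarith : (0:ℝ) < 2 * B)] at hl1
      nlinarith
    nlinarith

/-- expansion of ‖a + l • b‖² -/
lemma aux_norm_sq (a b : E) (l : ℝ) :
    ‖a + l • b‖ ^ 2 = ‖a‖ ^ 2 + 2 * l * ⟪a, b⟫ + l ^ 2 * ‖b‖ ^ 2 := by
  rw [norm_add_sq_real, real_inner_smul_right, norm_smul]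
  simp [mul_pow, sq_abs]
  ring

/-- 1-D comparison -/
lemma aux_oneD {g g' : ℝ → ℝ} (hg : ∀ θ, HasDerivAt g (g' θ) θ) {c : ℝ}
    (hc : ∀ θ ∈ Set.Icc (0:ℝ) 1, g' θ ≤ c * θ) : g 1 - g 0 ≤ c / 2 := by
  set φ : ℝ → ℝ := fun θ => c * θ ^ 2 / 2 - g θ with hφ
  have hd : ∀ θ : ℝ, HasDerivAt φ (c * θ - g' θ) θ := by
    intro θ
    have h1 : HasDerivAt (fun θ : ℝ => c * θ ^ 2 / 2) (c * θ) θ := by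
      have h2 := (hasDerivAt_pow 2 θ).const_mul (c / 2)
      have h4 : (fun y : ℝ => c / 2 * y ^ 2) = fun θ : ℝ => c * θ ^ 2 / 2 := by
        funext y; ring
      rw [h4] at h2
      refine h2.congr_deriv ?_
      push_cast; ring
    exact h1.sub (hg θ)
  have hmono : MonotoneOn φ (Set.Icc (0:ℝ) 1) := by
    apply monotoneOn_of_deriv_nonneg (convex_Icc 0 1)
    · have : Differentiable ℝ φ := fun θ => (hd θ).differentiableAt
      exact this.continuous.continuousOn
    · intro θ hθ
      exact (hd θ).differentiableAt.differentiableWithinAt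
    · intro θ hθ
      rw [(hd θ).deriv]
      rw [interior_Icc] at hθ
      have := hc θ ⟨le_of_lt hθ.1, le_of_lt hθ.2⟩
      linarith
  have := hmono (Set.mem_Icc.mpr ⟨le_refl 0, zero_le_one⟩) (Set.mem_Icc.mpr ⟨zero_le_one, le_refl 1⟩) zero_le_one
  simp only [hφ] at this
  nlinarith


open scoped RealInnerProductSpace

variable {E : Type*} [NormedAddCommGroup E] [InnerProductSpace ℝ E] [CompleteSpace E]

lemma aux_line_deriv {f : E → ℝ} (hf : Differentiable ℝ f) (x d : E) (θ : ℝ) :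
    HasDerivAt (fun θ : ℝ => f (x + θ • d)) ⟪gradient f (x + θ • d), d⟫ θ := by
  have h1 : HasDerivAt (fun θ : ℝ => x + θ • d) d θ := by
    simpa using ((hasDerivAt_id θ).smul_const d).const_add x
  have h2 := (hf (x + θ • d)).hasGradientAt.hasFDerivAt
  have h3 := h2.comp_hasDerivAt θ h1
  refine h3.congr_deriv ?_
  simp [gradient]

/-- Two-sided descent lemma -/
lemma aux_descent {f : E → ℝ} (hf : Differentiable ℝ f) {L : ℝ}
    (hlip : ∀ u v : E, ‖gradient f u - gradient f v‖ ≤ L * ‖u - v‖) (x y : E) :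
    |f y - f x - ⟪gradient f x, y - x⟫| ≤ L / 2 * ‖y - x‖ ^ 2 := by
  set d := y - x with hd
  have key : ∀ σ : ℝ, σ = 1 ∨ σ = -1 →
      σ * (f y - f x - ⟪gradient f x, d⟫) ≤ L * ‖d‖ ^ 2 / 2 := by
    intro σ hσ
    have hg : ∀ θ : ℝ, HasDerivAt (fun θ : ℝ => σ * (f (x + θ • d) - θ * ⟪gradient f x, d⟫))
        (σ * (⟪gradient f (x + θ • d), d⟫ - ⟪gradient f x, d⟫)) θ := by
      intro θ
      exact (((aux_line_deriv hf x d θ).sub (by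
        simpa using (hasDerivAt_id θ).mul_const ⟪gradient f x, d⟫)).const_mul σ)
    have hb : ∀ θ ∈ Set.Icc (0:ℝ) 1,
        σ * (⟪gradient f (x + θ • d), d⟫ - ⟪gradient f x, d⟫) ≤ (L * ‖d‖ ^ 2) * θ := by
      intro θ hθ
      have h5 : ⟪gradient f (x + θ • d) - gradient f x, d⟫ ≤ L * (θ * ‖d‖) * ‖d‖ := by
        calc ⟪gradient f (x + θ • d) - gradient f x, d⟫
            ≤ ‖gradient f (x + θ • d) - gradient f x‖ * ‖d‖ := real_inner_le_norm _ _
          _ ≤ L * (θ * ‖d‖) * ‖d‖ := by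
              apply mul_le_mul_of_nonneg_right _ (norm_nonneg d)
              have := hlip (x + θ • d) x
              simp only [add_sub_cancel_left, norm_smul] at this
              rw [Real.norm_eq_abs, abs_of_nonneg hθ.1] at this
              exact this
      have h6 : ⟪gradient f x - gradient f (x + θ • d), d⟫ ≤ L * (θ * ‖d‖) * ‖d‖ := by
        calc ⟪gradient f x - gradient f (x + θ • d), d⟫
            ≤ ‖gradient f x - gradient f (x + θ • d)‖ * ‖d‖ := real_inner_le_norm _ _
          _ ≤ L * (θ * ‖d‖) * ‖d‖ := by
              apply mul_le_mul_of_nonneg_right _ (norm_nonneg d)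
              have := hlip x (x + θ • d)
              rw [show x - (x + θ • d) = -(θ • d) by abel, norm_neg, norm_smul,
                Real.norm_eq_abs, abs_of_nonneg hθ.1] at this
              exact this
      rw [inner_sub_left] at h5 h6
      rcases hσ with rfl | rfl
      · nlinarith [h5]
      · nlinarith [h6]
    have := aux_oneD hg hb
    simp only [one_smul, zero_smul, add_zero, mul_zero, zero_mul, sub_zero, one_mul] at this
    have hxy : x + d = y := by rw [hd]; abel
    rw [hxy] at this
    calc σ * (f y - f x - ⟪gradient f x, d⟫)
        = σ * (f y - ⟪gradient f x, d⟫) - σ * f x := by ring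
      _ ≤ L * ‖d‖ ^ 2 / 2 := this
  rw [abs_le]
  constructor
  · have := key (-1) (Or.inr rfl); nlinarith
  · have := key 1 (Or.inl rfl); nlinarith

section Prox
variable {E : Type*} [NormedAddCommGroup E] [InnerProductSpace ℝ E]
  {h : E → ℝ} (hconv : ConvexOn ℝ Set.univ h)
  {prox : E → E}
  (hprox : ∀ z y, h (prox z) + 1 / 2 * ‖prox z - z‖ ^ 2 ≤ h y + 1 / 2 * ‖y - z‖ ^ 2)

include hconv hprox in
/-- strengthened prox inequality -/
lemma aux_prox_strong (z y : E) :
    h (prox z) + 1 / 2 * ‖prox z - z‖ ^ 2 + 1 / 2 * ‖y - prox z‖ ^ 2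
      ≤ h y + 1 / 2 * ‖y - z‖ ^ 2 := by
  set u := prox z with hu
  have key : 0 ≤ (h y + 1 / 2 * ‖y - z‖ ^ 2 - h u - 1 / 2 * ‖u - z‖ ^ 2 - 1 / 2 * ‖y - u‖ ^ 2)
      + 0 := by
    have := aux_limA (A := h y + 1 / 2 * ‖y - z‖ ^ 2 - h u - 1 / 2 * ‖u - z‖ ^ 2
        - 1 / 2 * ‖y - u‖ ^ 2) (B := 1 / 2 * ‖y - u‖ ^ 2) ?_
    · linarith
    intro l hl0 hl1
    have hcvx := hconv.2 (Set.mem_univ u) (Set.mem_univ y)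
      (by linarith : (0:ℝ) ≤ 1 - l) (le_of_lt hl0) (by ring)
    have hpt : (1 - l) • u + l • y = u + l • (y - u) := by
      rw [smul_sub, sub_smul, one_smul]; abel
    rw [hpt] at hcvx
    simp only [smul_eq_mul] at hcvx
    have hmin := hprox z (u + l • (y - u))
    rw [← hu] at hmin
    have hnorm : ‖u + l • (y - u) - z‖ ^ 2
        = ‖u - z‖ ^ 2 + 2 * l * ⟪u - z, y - u⟫ + l ^ 2 * ‖y - u‖ ^ 2 := by
      rw [show u + l • (y - u) - z = (u - z) + l • (y - u) by abel]
      exact aux_norm_sq _ _ _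
    have hnorm2 : ‖y - z‖ ^ 2 = ‖u - z‖ ^ 2 + 2 * ⟪u - z, y - u⟫ + ‖y - u‖ ^ 2 := by
      have := aux_norm_sq (u - z) (y - u) 1
      simp only [one_smul, one_pow, mul_one, one_mul] at this
      rw [show (u - z) + (y - u) = y - z by abel] at this
      linarith
    nlinarith [hmin, hcvx]
  linarith

include hconv hprox in
/-- prox is nonexpansive -/
lemma aux_prox_nonexp (z₁ z₂ : E) : ‖prox z₁ - prox z₂‖ ≤ ‖z₁ - z₂‖ := by
  set u := prox z₁ with hu
  set v := prox z₂ with hv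
  have h1 : h u + 1 / 2 * ‖u - z₁‖ ^ 2 + 1 / 2 * ‖v - u‖ ^ 2 ≤ h v + 1 / 2 * ‖v - z₁‖ ^ 2 := by
    rw [hu]; exact aux_prox_strong hconv hprox z₁ v
  have h2 : h v + 1 / 2 * ‖v - z₂‖ ^ 2 + 1 / 2 * ‖u - v‖ ^ 2 ≤ h u + 1 / 2 * ‖u - z₂‖ ^ 2 := by
    rw [hv]; exact aux_prox_strong hconv hprox z₂ u
  have hkey : ‖u - v‖ ^ 2 ≤ ⟪u - v, z₁ - z₂⟫ := by
    have e1 : ‖v - z₁‖ ^ 2 = ‖v - z₂‖ ^ 2 + 2 * ⟪v - z₂, z₂ - z₁⟫ + ‖z₂ - z₁‖ ^ 2 := by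
      have := aux_norm_sq (v - z₂) (z₂ - z₁) 1
      simp only [one_smul, one_pow, mul_one, one_mul] at this
      rw [show v - z₂ + (z₂ - z₁) = v - z₁ by abel] at this
      linarith
    have e2 : ‖u - z₂‖ ^ 2 = ‖u - z₁‖ ^ 2 + 2 * ⟪u - z₁, z₁ - z₂⟫ + ‖z₁ - z₂‖ ^ 2 := by
      have := aux_norm_sq (u - z₁) (z₁ - z₂) 1
      simp only [one_smul, one_pow, mul_one, one_mul] at this
      rw [show u - z₁ + (z₁ - z₂) = u - z₂ by abel] at this
      linarith
    have e3 : ‖v - u‖ ^ 2 = ‖u - v‖ ^ 2 := by rw [← neg_sub, norm_neg]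
    have e4 : ⟪v - z₂, z₂ - z₁⟫ = -⟪v - z₂, z₁ - z₂⟫ := by
      rw [← inner_neg_right]; congr 1; abel
    have e5 : ‖z₂ - z₁‖ ^ 2 = ‖z₁ - z₂‖ ^ 2 := by rw [← neg_sub, norm_neg]
    have e6 : ⟪u - z₁, z₁ - z₂⟫ - ⟪v - z₂, z₁ - z₂⟫ = ⟪u - v, z₁ - z₂⟫ - ‖z₁ - z₂‖ ^ 2 := by
      rw [← inner_sub_left, show u - z₁ - (v - z₂) = (u - v) - (z₁ - z₂) by abel,
        inner_sub_left, real_inner_self_eq_norm_sq]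
    linarith [h1, h2, e1, e2, e3, e4, e5, e6]
  have := real_inner_le_norm (u - v) (z₁ - z₂)
  nlinarith [norm_nonneg (u - v), norm_nonneg (z₁ - z₂)]

end Prox

section Sums

/-- telescoping bound -/
lemma aux_tele {E : Type*} [NormedAddCommGroup E] (x : ℕ → E) (a b : ℕ) (hab : a ≤ b) :
    ‖x b - x a‖ ≤ ∑ s ∈ Finset.Ico a b, ‖x (s + 1) - x s‖ := by
  induction b with
  | zero => interval_cases a; simp
  | succ n ih =>
    rcases Nat.lt_or_ge a (n + 1) with hlt | hge
    · have ha : a ≤ n := Nat.lt_succ_iff.mp hlt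
      rw [Finset.sum_Ico_succ_top ha]
      calc ‖x (n + 1) - x a‖ ≤ ‖x n - x a‖ + ‖x (n + 1) - x n‖ := by
            rw [show x (n+1) - x a = (x n - x a) + (x (n+1) - x n) by abel]
            exact norm_add_le _ _
        _ ≤ _ := by have := ih ha; linarith
    · have : a = n + 1 := le_antisymm hab hge
      subst this; simp

/-- window double-sum bound -/
lemma aux_window (a : ℕ → ℝ) (ha : ∀ s, 0 ≤ a s) (T K : ℕ) (W : ℕ → Finset ℕ)
    (hWsub : ∀ t, t < T → W t ⊆ Finset.range T)
    (hcount : ∀ s, ((Finset.range T).filter (fun t => s ∈ W t)).card ≤ K) :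
    ∑ t ∈ Finset.range T, ∑ s ∈ W t, a s ≤ (K : ℝ) * ∑ s ∈ Finset.range T, a s := by
  have step1 : ∑ t ∈ Finset.range T, ∑ s ∈ W t, a s
      = ∑ t ∈ Finset.range T, ∑ s ∈ Finset.range T, (if s ∈ W t then a s else 0) := by
    apply Finset.sum_congr rfl
    intro t ht
    rw [Finset.sum_ite_mem, Finset.inter_comm, Finset.inter_eq_left.mpr
      (hWsub t (Finset.mem_range.mp ht))]
  rw [step1, Finset.sum_comm]
  have step2 : ∀ s ∈ Finset.range T,
      ∑ t ∈ Finset.range T, (if s ∈ W t then a s else 0) ≤ (K : ℝ) * a s := by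
    intro s _
    rw [Finset.sum_ite, Finset.sum_const_zero, add_zero, Finset.sum_const, nsmul_eq_mul]
    exact mul_le_mul_of_nonneg_right (Nat.cast_le.mpr (hcount s)) (ha s)
  calc ∑ s ∈ Finset.range T, ∑ t ∈ Finset.range T, (if s ∈ W t then a s else 0)
      ≤ ∑ s ∈ Finset.range T, (K : ℝ) * a s := Finset.sum_le_sum step2
    _ = (K : ℝ) * ∑ s ∈ Finset.range T, a s := by rw [Finset.mul_sum]

end Sums

section Key
variable {E : Type*} [NormedAddCommGroup E] [InnerProductSpace ℝ E] [CompleteSpace E]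
variable {f1 h : E → ℝ} {L ρ γ : ℝ}

/-- strong convexity bonus at the minimizer of the surrogate -/
lemma aux_K1 (hf1 : Differentiable ℝ f1)
    (hlip : ∀ u v : E, ‖gradient f1 u - gradient f1 v‖ ≤ L * ‖u - v‖)
    (X u wv : E)
    (hstrongX : StrongConvexOn Set.univ γ (fun y => h y + ρ / 2 * ‖y - X‖ ^ 2))
    (hupd : ∀ y : E, f1 u + h u + ρ / 2 * ‖u - X‖ ^ 2 + ⟪wv, u - X⟫ ≤
      f1 y + h y + ρ / 2 * ‖y - X‖ ^ 2 + ⟪wv, y - X⟫) :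
    f1 u + h u + ρ / 2 * ‖u - X‖ ^ 2 + ⟪wv, u - X⟫ + (γ - L) / 2 * ‖u - X‖ ^ 2
      ≤ f1 X + h X := by
  set d := X - u with hd
  have hnd : ‖d‖ ^ 2 = ‖u - X‖ ^ 2 := by rw [hd, ← neg_sub u X, norm_neg]
  have hA : 0 ≤ ⟪gradient f1 u, d⟫ + ⟪wv, d⟫ + h X - (h u + ρ / 2 * ‖u - X‖ ^ 2)
      - γ / 2 * ‖u - X‖ ^ 2 := by
    apply aux_limA (B := (L / 2 + γ / 2) * ‖u - X‖ ^ 2)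
    intro l hl0 hl1
    have hupl := hupd (u + l • d)
    have hf1u : f1 (u + l • d) ≤ f1 u + l * ⟪gradient f1 u, d⟫
        + L / 2 * (l ^ 2 * ‖u - X‖ ^ 2) := by
      have := abs_le.mp (aux_descent hf1 hlip u (u + l • d))
      have e1 : u + l • d - u = l • d := by abel
      rw [e1, real_inner_smul_right, norm_smul, Real.norm_eq_abs, abs_of_nonneg hl0.le,
        mul_pow, hnd] at this
      nlinarith [this.2]
    have hψ := (hstrongX).2 (Set.mem_univ u) (Set.mem_univ X)
      (by linarith : (0:ℝ) ≤ 1 - l) hl0.le (by ring)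
    rw [show (1 - l) • u + l • X = u + l • d by rw [hd, smul_sub, sub_smul, one_smul]; abel]
      at hψ
    simp only [smul_eq_mul, sub_self, norm_zero] at hψ
    have hin : ⟪wv, u + l • d - X⟫ = ⟪wv, u - X⟫ + l * ⟪wv, d⟫ := by
      rw [show u + l • d - X = (u - X) + l • d by abel, inner_add_right, real_inner_smul_right]
    nlinarith [hupl, hf1u, hψ, hin]
  have hlow := abs_le.mp (aux_descent hf1 hlip u X)
  have e2 : X - u = d := rfl
  rw [e2, hnd] at hlow
  have hinn : ⟪wv, u - X⟫ = -⟪wv, d⟫ := by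
    rw [hd, ← inner_neg_right]; congr 1; abel
  nlinarith [hlow.1, hA, hinn]

/-- fixed-point characterization of the surrogate minimizer -/
lemma aux_K2 (hf1 : Differentiable ℝ f1)
    (hlip : ∀ u v : E, ‖gradient f1 u - gradient f1 v‖ ≤ L * ‖u - v‖)
    (hconv : ConvexOn ℝ Set.univ h) (hρ : 0 < ρ)
    (X u wv : E)
    (hupd : ∀ y : E, f1 u + h u + ρ / 2 * ‖u - X‖ ^ 2 + ⟪wv, u - X⟫ ≤
      f1 y + h y + ρ / 2 * ‖y - X‖ ^ 2 + ⟪wv, y - X⟫)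
    (v : E) (hv : v = gradient f1 u + ρ • (u - X) + wv) :
    ∀ w : E, h u + 1 / 2 * ‖u - (u - v)‖ ^ 2 ≤ h w + 1 / 2 * ‖w - (u - v)‖ ^ 2 := by
  have step1 : ∀ y' : E, h u + ⟪v, u⟫ ≤ h y' + ⟪v, y'⟫ := by
    intro y'
    set d := y' - u with hd
    have hA : 0 ≤ h y' - h u + ⟪v, d⟫ := by
      apply aux_limA (B := (L / 2 + ρ / 2) * ‖d‖ ^ 2)
      intro l hl0 hl1
      have hupl := hupd (u + l • d)
      have hf1u : f1 (u + l • d) ≤ f1 u + l * ⟪gradient f1 u, d⟫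
          + L / 2 * (l ^ 2 * ‖d‖ ^ 2) := by
        have := abs_le.mp (aux_descent hf1 hlip u (u + l • d))
        have e1 : u + l • d - u = l • d := by abel
        rw [e1, real_inner_smul_right, norm_smul, Real.norm_eq_abs, abs_of_nonneg hl0.le,
          mul_pow] at this
        nlinarith [this.2]
      have hh : h (u + l • d) ≤ (1 - l) * h u + l * h y' := by
        have := hconv.2 (Set.mem_univ u) (Set.mem_univ y')
          (by linarith : (0:ℝ) ≤ 1 - l) hl0.le (by ring)
        rw [show (1 - l) • u + l • y' = u + l • d by
          rw [hd, smul_sub, sub_smul, one_smul]; abel] at this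
        simpa using this
      have hq : ‖u + l • d - X‖ ^ 2 = ‖u - X‖ ^ 2 + 2 * l * ⟪u - X, d⟫ + l ^ 2 * ‖d‖ ^ 2 := by
        rw [show u + l • d - X = (u - X) + l • d by abel]; exact aux_norm_sq _ _ _
      have hin : ⟪wv, u + l • d - X⟫ = ⟪wv, u - X⟫ + l * ⟪wv, d⟫ := by
        rw [show u + l • d - X = (u - X) + l • d by abel, inner_add_right,
          real_inner_smul_right]
      have hvd : ⟪v, d⟫ = ⟪gradient f1 u, d⟫ + ρ * ⟪u - X, d⟫ + ⟪wv, d⟫ := by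
        rw [hv, inner_add_left, inner_add_left, real_inner_smul_left]
      nlinarith [hupl, hf1u, hh, hq, hin, hvd]
    have : ⟪v, d⟫ = ⟪v, y'⟫ - ⟪v, u⟫ := by rw [hd, inner_sub_right]
    linarith [hA, this.le, this.ge]
  intro w
  have e1 : ‖u - (u - v)‖ ^ 2 = ‖v‖ ^ 2 := by rw [show u - (u - v) = v by abel]
  have e2 : ‖w - (u - v)‖ ^ 2 = ‖w - u‖ ^ 2 + 2 * ⟪w - u, v⟫ + ‖v‖ ^ 2 := by
    have := aux_norm_sq (w - u) v 1
    simp only [one_smul, one_pow, mul_one, one_mul] at this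
    rw [show w - u + v = w - (u - v) by abel] at this
    linarith
  have e3 : ⟪w - u, v⟫ = ⟪v, w⟫ - ⟪v, u⟫ := by
    rw [real_inner_comm, inner_sub_right]
  have := step1 w
  nlinarith [sq_nonneg ‖w - u‖, this, e1, e2, e3]

end Key

lemma aux_sq {g dn s q L ρ τ1 : ℝ} (hb : g ≤ (2 + ρ) * dn + 2 * L * s)
    (hCS : s ^ 2 ≤ τ1 * q) (hg0 : 0 ≤ g) (hq0 : 0 ≤ q) (hL : 0 ≤ L) (hρ : 0 ≤ ρ) :
    g ^ 2 ≤ 2 * (2 + ρ) ^ 2 * dn ^ 2 + 8 * L ^ 2 * τ1 * q := by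
  have h1 : g ^ 2 ≤ ((2 + ρ) * dn + 2 * L * s) ^ 2 := by nlinarith [hb, hg0]
  have h2 : ((2 + ρ) * dn + 2 * L * s) ^ 2 ≤ 2 * ((2 + ρ) * dn) ^ 2 + 2 * (2 * L * s) ^ 2 := by
    nlinarith [sq_nonneg ((2 + ρ) * dn - 2 * L * s)]
  have h3 : 8 * L ^ 2 * s ^ 2 ≤ 8 * L ^ 2 * (τ1 * q) := by nlinarith [hCS, sq_nonneg L]
  nlinarith [h1, h2, h3]

set_option maxHeartbeats 1000000 in
theorem stmt_11
    {p m τ : ℕ} (hp : 1 ≤ p) (hm : 0 < m)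
    {L ρ γ : ℝ}
    (hL : 0 < L) (hρ : 0 < ρ) (hγ : 0 < γ)
    (Lf : Fin m → EuclideanSpace ℝ (Fin p) → ℝ)
    (hdiff : ∀ j, Differentiable ℝ (Lf j))
    (hlip : ∀ j (u v : EuclideanSpace ℝ (Fin p)), ‖gradient (Lf j) u - gradient (Lf j) v‖ ≤ L * ‖u - v‖)
    (h : EuclideanSpace ℝ (Fin p) → ℝ)
    (hconv : ConvexOn ℝ Set.univ h)
    (hstrong : ∀ z : EuclideanSpace ℝ (Fin p), StrongConvexOn Set.univ γ (fun y => h y + ρ / 2 * ‖y - z‖ ^ 2))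
    (tj : ℕ → Fin m → ℕ)
    (htj : ∀ t j, t - τ ≤ tj t j ∧ tj t j ≤ t)
    (x : ℕ → EuclideanSpace ℝ (Fin p))
    (hupdate : ∀ t, ∀ y : EuclideanSpace ℝ (Fin p),
      Lf ⟨0, hm⟩ (x (t + 1)) + h (x (t + 1)) + ρ / 2 * ‖x (t + 1) - x t‖ ^ 2 +
          ⟪((m : ℝ)⁻¹ • ∑ j, gradient (Lf j) (x (tj t j))) - gradient (Lf ⟨0, hm⟩) (x (tj t ⟨0, hm⟩)), x (t + 1) - x t⟫ ≤
        Lf ⟨0, hm⟩ y + h y + ρ / 2 * ‖y - x t‖ ^ 2 +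
          ⟪((m : ℝ)⁻¹ • ∑ j, gradient (Lf j) (x (tj t j))) - gradient (Lf ⟨0, hm⟩) (x (tj t ⟨0, hm⟩)), y - x t⟫)
    (prox : EuclideanSpace ℝ (Fin p) → EuclideanSpace ℝ (Fin p))
    (hprox : ∀ z y, h (prox z) + 1 / 2 * ‖prox z - z‖ ^ 2 ≤ h y + 1 / 2 * ‖y - z‖ ^ 2)
    (hproxuniq : ∀ z y, (∀ w, h y + 1 / 2 * ‖y - z‖ ^ 2 ≤ h w + 1 / 2 * ‖w - z‖ ^ 2) → y = prox z)
    (δ : ℝ) (hδ : 0 < δ)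
    (hA1 : 3 * L + 2 * L * δ * τ < γ)
    (hA2 : 2 * L * τ / δ < ρ)
    (Llo : ℝ) (hLlo : ∀ y : EuclideanSpace ℝ (Fin p), Llo < (((m : ℝ)⁻¹ * ∑ j, Lf j (y)) + h (y)))
    (ε : ℝ) (hε : 0 < ε)
    :
    (∀ T : ℕ, (∀ t, t < T → ε ≤ ‖(x t - prox (x t - (m : ℝ)⁻¹ • (∑ j, gradient (Lf j) (x t))))‖ ^ 2) →
        (T : ℝ) * ε ≤ (2 * (2 + ρ) ^ 2 + 8 * L ^ 2 * ((τ : ℝ) + 1) ^ 2) / (min (γ / 2 - 3 * L / 2 - L * δ * τ) (ρ / 2 - L * τ / δ)) * ((((m : ℝ)⁻¹ * ∑ j, Lf j (x 1)) + ρ / 2 * ‖x 1 - x 0‖ ^ 2 + h (x 1)) - Llo)) ∧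
      (((sInf {t : ℕ | ‖(x t - prox (x t - (m : ℝ)⁻¹ • (∑ j, gradient (Lf j) (x t))))‖ ^ 2 < ε} : ℕ) : ℝ) ≤
        (2 * (2 + ρ) ^ 2 + 8 * L ^ 2 * ((τ : ℝ) + 1) ^ 2) / (min (γ / 2 - 3 * L / 2 - L * δ * τ) (ρ / 2 - L * τ / δ)) * ((((m : ℝ)⁻¹ * ∑ j, Lf j (x 1)) + ρ / 2 * ‖x 1 - x 0‖ ^ 2 + h (x 1)) - Llo) / ε + 1) := by
  classical
  have hm' : (0:ℝ) < m := by exact_mod_cast hm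
  set i0 : Fin m := ⟨0, hm⟩ with hi0
  set f1 : EuclideanSpace ℝ (Fin p) → ℝ := Lf i0 with hf1def
  set D : ℕ → EuclideanSpace ℝ (Fin p) := fun t => x (t + 1) - x t with hDdef
  set a : ℕ → ℝ := fun t => ‖D t‖ ^ 2 with hadef
  set gbar : EuclideanSpace ℝ (Fin p) → EuclideanSpace ℝ (Fin p) :=
    fun y => (m : ℝ)⁻¹ • ∑ j, gradient (Lf j) y with hgbardef
  set gdel : ℕ → EuclideanSpace ℝ (Fin p) :=
    fun t => (m : ℝ)⁻¹ • ∑ j, gradient (Lf j) (x (tj t j)) with hgdeldef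
  set wv : ℕ → EuclideanSpace ℝ (Fin p) :=
    fun t => gdel t - gradient f1 (x (tj t i0)) with hwvdef
  set Lb : EuclideanSpace ℝ (Fin p) → ℝ := fun y => (m : ℝ)⁻¹ * ∑ j, Lf j y with hLbdef
  set gap : ℕ → ℝ := fun t => ‖x t - prox (x t - gbar (x t))‖ with hgapdef
  set S : ℕ → ℝ := fun t => ∑ s ∈ Finset.Ico (t - τ) t, ‖D s‖ with hSdef
  set S' : ℕ → ℝ := fun t => ∑ s ∈ Finset.Ico (t - τ) (t + 1), ‖D s‖ with hS'def
  set Q : ℕ → ℝ := fun t => ∑ s ∈ Finset.Ico (t - τ) t, a s with hQdef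
  set Q' : ℕ → ℝ := fun t => ∑ s ∈ Finset.Ico (t - τ) (t + 1), a s with hQ'def
  set c1 : ℝ := γ / 2 - 3 * L / 2 - L * δ * τ with hc1def
  set c2 : ℝ := ρ / 2 - L * τ / δ with hc2def
  set cc : ℝ := min c1 c2 with hccdef
  set μ : ℝ := 2 * (2 + ρ) ^ 2 + 8 * L ^ 2 * ((τ : ℝ) + 1) ^ 2 with hμdef
  set F0 : ℝ := ((m : ℝ)⁻¹ * ∑ j, Lf j (x 1)) + ρ / 2 * ‖x 1 - x 0‖ ^ 2 + h (x 1) with hF0def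
  have hτ0 : (0:ℝ) ≤ (τ:ℝ) := Nat.cast_nonneg τ
  have hc1 : 0 < c1 := by rw [hc1def]; linarith
  have hc2 : 0 < c2 := by
    rw [hc2def]
    have h1 : 2 * L * τ < ρ * δ := by
      rw [div_lt_iff₀ hδ] at hA2; linarith
    rw [sub_pos, div_lt_iff₀ hδ]; linarith
  have hcc : 0 < cc := lt_min hc1 hc2
  have hμpos : 0 < μ := by rw [hμdef]; nlinarith
  have hanneg : ∀ s, 0 ≤ a s := fun s => sq_nonneg _
  have hSnneg : ∀ t, 0 ≤ S t := fun t => Finset.sum_nonneg fun s _ => norm_nonneg _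
  have hS'nneg : ∀ t, 0 ≤ S' t := fun t => Finset.sum_nonneg fun s _ => norm_nonneg _
  have hQnneg : ∀ t, 0 ≤ Q t := fun t => Finset.sum_nonneg fun s _ => hanneg s
  have hQ'nneg : ∀ t, 0 ≤ Q' t := fun t => Finset.sum_nonneg fun s _ => hanneg s
  -- telescoping
  have htele : ∀ b a' : ℕ, a' ≤ b → ‖x b - x a'‖ ≤ ∑ s ∈ Finset.Ico a' b, ‖D s‖ := by
    intro b a' hab
    simpa [hDdef] using aux_tele x a' b hab
  have hxdel : ∀ t (j : Fin m), ‖x (tj t j) - x t‖ ≤ S t := by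
    intro t j
    rw [← neg_sub, norm_neg]
    calc ‖x t - x (tj t j)‖ ≤ ∑ s ∈ Finset.Ico (tj t j) t, ‖D s‖ := htele t _ (htj t j).2
      _ ≤ S t := Finset.sum_le_sum_of_subset_of_nonneg
          (Finset.Ico_subset_Ico (htj t j).1 le_rfl) (fun s _ _ => norm_nonneg _)
  have hxdel' : ∀ t, ‖x (t + 1) - x (tj t i0)‖ ≤ S' t := by
    intro t
    calc ‖x (t + 1) - x (tj t i0)‖ ≤ ∑ s ∈ Finset.Ico (tj t i0) (t + 1), ‖D s‖ :=
        htele (t + 1) _ (le_trans (htj t i0).2 (Nat.le_succ t))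
      _ ≤ S' t := Finset.sum_le_sum_of_subset_of_nonneg
          (Finset.Ico_subset_Ico (htj t i0).1 le_rfl) (fun s _ _ => norm_nonneg _)
  -- average gradient error
  have hgdel : ∀ t, ‖gdel t - gbar (x t)‖ ≤ L * S t := by
    intro t
    have e1 : gdel t - gbar (x t)
        = (m : ℝ)⁻¹ • ∑ j, (gradient (Lf j) (x (tj t j)) - gradient (Lf j) (x t)) := by
      rw [hgdeldef, hgbardef, ← smul_sub, ← Finset.sum_sub_distrib]
    rw [e1, norm_smul, Real.norm_eq_abs, abs_inv, Nat.abs_cast]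
    have e2 : ‖∑ j, (gradient (Lf j) (x (tj t j)) - gradient (Lf j) (x t))‖
        ≤ ∑ j : Fin m, (L * S t) := by
      refine le_trans (norm_sum_le _ _) (Finset.sum_le_sum fun j _ => ?_)
      exact le_trans (hlip j _ _) (mul_le_mul_of_nonneg_left (hxdel t j) hL.le)
    rw [Finset.sum_const, Finset.card_univ, Fintype.card_fin, nsmul_eq_mul] at e2
    calc (m:ℝ)⁻¹ * ‖∑ j, (gradient (Lf j) (x (tj t j)) - gradient (Lf j) (x t))‖
        ≤ (m:ℝ)⁻¹ * ((m:ℝ) * (L * S t)) := by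
          exact mul_le_mul_of_nonneg_left e2 (by positivity)
      _ = L * S t := by field_simp
  -- average function descent (two-sided)
  have hP2 : ∀ u v : EuclideanSpace ℝ (Fin p),
      |Lb v - Lb u - ⟪gbar u, v - u⟫| ≤ L / 2 * ‖v - u‖ ^ 2 := by
    intro u v
    have e1 : ⟪gbar u, v - u⟫ = (m : ℝ)⁻¹ * ∑ j, ⟪gradient (Lf j) u, v - u⟫ := by
      simp only [hgbardef]
      rw [real_inner_smul_left, sum_inner]
    have e2 : Lb v - Lb u - ⟪gbar u, v - u⟫
        = (m : ℝ)⁻¹ * ∑ j, (Lf j v - Lf j u - ⟪gradient (Lf j) u, v - u⟫) := by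
      rw [e1]
      simp only [hLbdef, Finset.sum_sub_distrib]
      ring
    rw [e2, abs_mul, abs_inv, Nat.abs_cast]
    have e3 : |∑ j, (Lf j v - Lf j u - ⟪gradient (Lf j) u, v - u⟫)|
        ≤ ∑ j : Fin m, (L / 2 * ‖v - u‖ ^ 2) := by
      refine le_trans (Finset.abs_sum_le_sum_abs _ _) (Finset.sum_le_sum fun j _ => ?_)
      exact aux_descent (hdiff j) (hlip j) u v
    rw [Finset.sum_const, Finset.card_univ, Fintype.card_fin, nsmul_eq_mul] at e3
    calc (m:ℝ)⁻¹ * |∑ j, (Lf j v - Lf j u - ⟪gradient (Lf j) u, v - u⟫)|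
        ≤ (m:ℝ)⁻¹ * ((m:ℝ) * (L / 2 * ‖v - u‖ ^ 2)) := by
          exact mul_le_mul_of_nonneg_left e3 (by positivity)
      _ = L / 2 * ‖v - u‖ ^ 2 := by field_simp
  -- key step inequalities
  have hK1 : ∀ t, f1 (x (t + 1)) + h (x (t + 1)) + ρ / 2 * a t + ⟪wv t, D t⟫
      + (γ - L) / 2 * a t ≤ f1 (x t) + h (x t) := by
    intro t
    exact aux_K1 (hdiff i0) (hlip i0) (x t) (x (t + 1)) (wv t) (hstrong (x t))
      (fun y => hupdate t y)
  have hK2 : ∀ t, x (t + 1) = prox (x (t + 1) - (gradient f1 (x (t + 1)) + ρ • D t + wv t)) := by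
    intro t
    exact hproxuniq _ _ (aux_K2 (hdiff i0) (hlip i0) hconv hρ (x t) (x (t + 1)) (wv t)
      (fun y => hupdate t y) _ rfl)
  -- per-step decrease of the objective
  have hK3 : ∀ t, Lb (x (t + 1)) + h (x (t + 1))
      ≤ Lb (x t) + h (x t) - (ρ / 2 + c1) * a t + L / δ * Q t := by
    intro t
    have hub := abs_le.mp (hP2 (x t) (x (t + 1)))
    have hlb := abs_le.mp (aux_descent (hdiff i0) (hlip i0) (x t) (x (t + 1)))
    have hDt : x (t + 1) - x t = D t := rfl
    rw [hDt] at hub hlb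
    -- cross term bound
    have hcross : ⟪gbar (x t), D t⟫ - ⟪gradient f1 (x t), D t⟫ - ⟪wv t, D t⟫
        ≤ L * δ * τ * a t + L / δ * Q t := by
      have e1 : ⟪gbar (x t), D t⟫ - ⟪gradient f1 (x t), D t⟫ - ⟪wv t, D t⟫
          = ⟪gbar (x t) - gdel t, D t⟫ + ⟪gradient f1 (x (tj t i0)) - gradient f1 (x t), D t⟫ := by
        rw [← inner_add_left, ← inner_sub_left, ← inner_sub_left]
        congr 1
        rw [hwvdef]
        module
      have e2 : ⟪gbar (x t) - gdel t, D t⟫ ≤ L * S t * ‖D t‖ := by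
        refine le_trans (real_inner_le_norm _ _) (mul_le_mul_of_nonneg_right ?_ (norm_nonneg _))
        rw [← neg_sub (gdel t), norm_neg]
        exact hgdel t
      have e3 : ⟪gradient f1 (x (tj t i0)) - gradient f1 (x t), D t⟫ ≤ L * S t * ‖D t‖ := by
        refine le_trans (real_inner_le_norm _ _) (mul_le_mul_of_nonneg_right ?_ (norm_nonneg _))
        exact le_trans (hlip i0 _ _) (mul_le_mul_of_nonneg_left (hxdel t i0) hL.le)
      have e4 : 2 * (L * S t * ‖D t‖) ≤ L * δ * τ * a t + L / δ * Q t := by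
        have e5 : 2 * (L * S t * ‖D t‖) = ∑ s ∈ Finset.Ico (t - τ) t, (2 * L * ‖D s‖ * ‖D t‖) := by
          simp only [hSdef]
          rw [← Finset.sum_mul, ← Finset.mul_sum]
          ring
        have e6 : ∀ s ∈ Finset.Ico (t - τ) t, 2 * L * ‖D s‖ * ‖D t‖
            ≤ L * δ * a t + L / δ * a s := by
          intro s _
          have h0 : 0 ≤ L * (δ * ‖D t‖ - ‖D s‖) ^ 2 := mul_nonneg hL.le (sq_nonneg _)
          simp only [hadef]
          apply le_of_mul_le_mul_right _ hδ
          have e11 : (L * δ * ‖D t‖ ^ 2 + L / δ * ‖D s‖ ^ 2) * δ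
              = L * δ ^ 2 * ‖D t‖ ^ 2 + L * ‖D s‖ ^ 2 := by
            field_simp
          rw [e11]
          nlinarith [norm_nonneg (D s), norm_nonneg (D t)]
        have e7 := Finset.sum_le_sum e6
        rw [e5]
        have e8 : ∑ s ∈ Finset.Ico (t - τ) t, (L * δ * a t + L / δ * a s)
            = (Finset.Ico (t - τ) t).card * (L * δ * a t) + L / δ * Q t := by
          rw [Finset.sum_add_distrib, Finset.sum_const, nsmul_eq_mul]
          simp only [hQdef]
          rw [Finset.mul_sum]
        have e9 : ((Finset.Ico (t - τ) t).card : ℝ) ≤ (τ : ℝ) := by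
          rw [Nat.card_Ico]
          exact_mod_cast Nat.sub_le_iff_le_add.mpr (by omega)
        have e10 : 0 ≤ L * δ * a t := by positivity
        calc ∑ s ∈ Finset.Ico (t - τ) t, (2 * L * ‖D s‖ * ‖D t‖)
            ≤ ∑ s ∈ Finset.Ico (t - τ) t, (L * δ * a t + L / δ * a s) := e7
          _ = (Finset.Ico (t - τ) t).card * (L * δ * a t) + L / δ * Q t := e8
          _ ≤ (τ:ℝ) * (L * δ * a t) + L / δ * Q t := by nlinarith
          _ = L * δ * τ * a t + L / δ * Q t := by ring
      linarith [e1.le, e1.ge, e2, e3, e4]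
    have hK1t := hK1 t
    simp only [hadef, hc1def] at hcross hK1t ⊢
    linarith [hub.2, hlb.1, hcross, hK1t]
  -- Lyapunov telescoping
  have htele2 : ∀ n : ℕ, Lb (x (n + 1)) + h (x (n + 1)) + ρ / 2 * a n
      ≤ F0 - ρ / 2 * (∑ t ∈ Finset.range n, a t) - c1 * (∑ t ∈ Finset.range n, a (t + 1))
        + L / δ * (∑ t ∈ Finset.range n, Q (t + 1)) := by
    intro n
    induction n with
    | zero =>
      simp only [Finset.range_zero, Finset.sum_empty, mul_zero, sub_zero, add_zero]
      have : F0 = Lb (x 1) + h (x 1) + ρ / 2 * a 0 := by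
        rw [hF0def, hLbdef]
        norm_num
        ring
      rw [this]
    | succ n ih =>
      have h3 := hK3 (n + 1)
      rw [Finset.sum_range_succ, Finset.sum_range_succ, Finset.sum_range_succ]
      linarith
  have hK5 : ∀ T : ℕ, cc * ∑ s ∈ Finset.range T, a s ≤ F0 - Llo := by
    intro T
    have hccle1 : cc ≤ c1 := min_le_left _ _
    have hccle2 : cc ≤ c2 := min_le_right _ _
    have hLτδ : 0 ≤ L * τ / δ := by positivity
    cases T with
    | zero =>
      simp only [Finset.range_zero, Finset.sum_empty, mul_zero]
      have h1 := hLlo (x 1)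
      rw [hF0def]
      have : 0 ≤ ρ / 2 * ‖x 1 - x 0‖ ^ 2 := by positivity
      linarith
    | succ n =>
      have ht2 := htele2 n
      have hwin : ∑ t ∈ Finset.range n, Q (t + 1) ≤ (τ : ℝ) * ∑ s ∈ Finset.range n, a s := by
        have := aux_window a hanneg n τ (fun t => Finset.Ico (t + 1 - τ) (t + 1)) ?_ ?_
        · simpa only [hQdef] using this
        · intro t ht
          intro s hs
          rw [Finset.mem_Ico] at hs
          rw [Finset.mem_range]
          omega
        · intro s
          calc ((Finset.range n).filter (fun t => s ∈ Finset.Ico (t + 1 - τ) (t + 1))).card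
              ≤ (Finset.Ico s (s + τ)).card := by
                apply Finset.card_le_card
                intro t ht
                rw [Finset.mem_filter, Finset.mem_range, Finset.mem_Ico] at ht
                rw [Finset.mem_Ico]
                omega
            _ = τ := by rw [Nat.card_Ico]; omega
      have hLlo1 : Llo < Lb (x (n + 1)) + h (x (n + 1)) := hLlo (x (n + 1))
      have hsum1 : 0 ≤ ∑ t ∈ Finset.range n, a t := Finset.sum_nonneg fun s _ => hanneg s
      have hsum2 : 0 ≤ ∑ t ∈ Finset.range n, a (t + 1) := Finset.sum_nonneg fun s _ => hanneg (s + 1)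
      have hc1sum : 0 ≤ c1 * ∑ t ∈ Finset.range n, a (t + 1) := mul_nonneg hc1.le hsum2
      have hLδwin : L / δ * (∑ t ∈ Finset.range n, Q (t + 1))
          ≤ L / δ * ((τ : ℝ) * ∑ s ∈ Finset.range n, a s) := by
        apply mul_le_mul_of_nonneg_left hwin (by positivity)
      rw [Finset.sum_range_succ]
      have key : Lb (x (n + 1)) + h (x (n + 1)) + ρ / 2 * a n
          ≤ F0 - (ρ / 2 - L * τ / δ) * (∑ t ∈ Finset.range n, a t) := by
        have e : L / δ * ((τ:ℝ) * ∑ s ∈ Finset.range n, a s)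
            = L * τ / δ * (∑ s ∈ Finset.range n, a s) := by ring
        rw [e] at hLδwin
        clear_value a Q c1 cc F0 Lb
        linarith [ht2, hLδwin, hc1sum]
      have han : 0 ≤ a n := hanneg n
      have hccρ : cc ≤ ρ / 2 := by rw [hc2def] at hccle2; linarith
      have e2 : cc * (∑ t ∈ Finset.range n, a t) ≤ (ρ / 2 - L * τ / δ) * (∑ t ∈ Finset.range n, a t) := by
        apply mul_le_mul_of_nonneg_right _ hsum1
        rw [hc2def] at hccle2; linarith
      rw [mul_add]
      clear_value a Q c1 c2 cc F0 Lb
      linarith [e2, key, hLlo1, mul_le_mul_of_nonneg_right hccρ han]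
  -- gap bound
  have hK6 : ∀ t, gap t ^ 2 ≤ 2 * (2 + ρ) ^ 2 * a t + 8 * L ^ 2 * ((τ:ℝ) + 1) * Q' t := by
    intro t
    have hb1 : gap t ≤ ‖D t‖ + ‖x (t + 1) - prox (x t - gbar (x t))‖ := by
      have e : x t - prox (x t - gbar (x t))
          = -(D t) + (x (t + 1) - prox (x t - gbar (x t))) := by
        simp only [hDdef]; abel
      calc gap t = ‖x t - prox (x t - gbar (x t))‖ := rfl
        _ = ‖-(D t) + (x (t + 1) - prox (x t - gbar (x t)))‖ := by rw [← e]
        _ ≤ ‖-(D t)‖ + ‖x (t + 1) - prox (x t - gbar (x t))‖ := norm_add_le _ _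
        _ = ‖D t‖ + ‖x (t + 1) - prox (x t - gbar (x t))‖ := by rw [norm_neg]
    have hb2 : ‖x (t + 1) - prox (x t - gbar (x t))‖
        ≤ ‖(x (t + 1) - (gradient f1 (x (t + 1)) + ρ • D t + wv t)) - (x t - gbar (x t))‖ := by
      conv_lhs => rw [hK2 t]
      exact aux_prox_nonexp hconv hprox _ _
    have hb3 : ‖(x (t + 1) - (gradient f1 (x (t + 1)) + ρ • D t + wv t)) - (x t - gbar (x t))‖
        ≤ ‖D t‖ + ‖(gradient f1 (x (t + 1)) + ρ • D t + wv t) - gbar (x t)‖ := by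
      rw [show (x (t + 1) - (gradient f1 (x (t + 1)) + ρ • D t + wv t)) - (x t - gbar (x t))
          = D t - ((gradient f1 (x (t + 1)) + ρ • D t + wv t) - gbar (x t)) by
        simp only [hDdef]; abel]
      exact norm_sub_le _ _
    have hb4 : ‖(gradient f1 (x (t + 1)) + ρ • D t + wv t) - gbar (x t)‖
        ≤ L * S' t + ρ * ‖D t‖ + L * S t := by
      have e : (gradient f1 (x (t + 1)) + ρ • D t + wv t) - gbar (x t)
          = ((gradient f1 (x (t + 1)) - gradient f1 (x (tj t i0))) + ρ • D t)
            + (gdel t - gbar (x t)) := by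
        simp only [hwvdef]; abel
      have hplus := norm_add_le (gradient f1 (x (t + 1)) - gradient f1 (x (tj t i0))) (ρ • D t)
      rw [e]
      calc ‖((gradient f1 (x (t + 1)) - gradient f1 (x (tj t i0))) + ρ • D t)
            + (gdel t - gbar (x t))‖
          ≤ ‖(gradient f1 (x (t + 1)) - gradient f1 (x (tj t i0))) + ρ • D t‖
            + ‖gdel t - gbar (x t)‖ := norm_add_le _ _
        _ ≤ ‖gradient f1 (x (t + 1)) - gradient f1 (x (tj t i0))‖ + ‖ρ • D t‖
            + ‖gdel t - gbar (x t)‖ := by linarith [hplus]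
        _ ≤ L * S' t + ρ * ‖D t‖ + L * S t := by
            have e1 : ‖ρ • D t‖ = ρ * ‖D t‖ := by
              rw [norm_smul, Real.norm_eq_abs, abs_of_nonneg hρ.le]
            have e2 : ‖gradient f1 (x (t + 1)) - gradient f1 (x (tj t i0))‖ ≤ L * S' t :=
              le_trans (hlip i0 _ _) (mul_le_mul_of_nonneg_left (hxdel' t) hL.le)
            have e3 := hgdel t
            linarith
    have hSS' : S t ≤ S' t := by
      simp only [hSdef, hS'def]
      exact Finset.sum_le_sum_of_subset_of_nonneg
        (Finset.Ico_subset_Ico le_rfl (Nat.le_succ t)) (fun s _ _ => norm_nonneg _)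
    have hb : gap t ≤ (2 + ρ) * ‖D t‖ + 2 * L * S' t := by
      have hLS := mul_le_mul_of_nonneg_left hSS' hL.le
      linarith [hb1, hb2, hb3, hb4, hLS]
    have hCS : S' t ^ 2 ≤ ((τ:ℝ) + 1) * Q' t := by
      have hcard := sq_sum_le_card_mul_sum_sq (s := Finset.Ico (t - τ) (t + 1))
        (f := fun s => ‖D s‖)
      have hcard2 : (((Finset.Ico (t - τ) (t + 1)).card) : ℝ) ≤ (τ:ℝ) + 1 := by
        rw [Nat.card_Ico]
        exact_mod_cast (by omega : t + 1 - (t - τ) ≤ τ + 1)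
      have hQnn : (0:ℝ) ≤ ∑ s ∈ Finset.Ico (t - τ) (t + 1), ‖D s‖ ^ 2 :=
        Finset.sum_nonneg fun s _ => sq_nonneg _
      calc S' t ^ 2 = (∑ s ∈ Finset.Ico (t - τ) (t + 1), ‖D s‖) ^ 2 := by
            simp only [hS'def]
        _ ≤ ((Finset.Ico (t - τ) (t + 1)).card : ℝ)
            * ∑ s ∈ Finset.Ico (t - τ) (t + 1), ‖D s‖ ^ 2 := hcard
        _ ≤ ((τ:ℝ) + 1) * ∑ s ∈ Finset.Ico (t - τ) (t + 1), ‖D s‖ ^ 2 :=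
            mul_le_mul_of_nonneg_right hcard2 hQnn
        _ = ((τ:ℝ) + 1) * Q' t := by simp only [hQ'def, hadef]
    have hg0 : (0:ℝ) ≤ gap t := norm_nonneg _
    have hDa : a t = ‖D t‖ ^ 2 := rfl
    rw [hDa]
    exact aux_sq hb hCS hg0 (hQ'nneg t) hL.le hρ.le
  have hK7 : ∀ T : ℕ, ∑ t ∈ Finset.range T, gap t ^ 2 ≤ μ * ∑ s ∈ Finset.range T, a s := by
    intro T
    have hs := Finset.sum_le_sum (fun t (_ : t ∈ Finset.range T) => hK6 t)
    have hwin' : ∑ t ∈ Finset.range T, Q' t ≤ ((τ:ℝ) + 1) * ∑ s ∈ Finset.range T, a s := by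
      have := aux_window a hanneg T (τ + 1) (fun t => Finset.Ico (t - τ) (t + 1)) ?_ ?_
      · have ecast : ((τ + 1 : ℕ) : ℝ) = (τ:ℝ) + 1 := by push_cast; ring
        rw [ecast] at this
        simpa only [hQ'def] using this
      · intro t ht s hs
        rw [Finset.mem_Ico] at hs
        rw [Finset.mem_range]
        omega
      · intro s
        calc ((Finset.range T).filter (fun t => s ∈ Finset.Ico (t - τ) (t + 1))).card
            ≤ (Finset.Icc s (s + τ)).card := by
              apply Finset.card_le_card
              intro t ht
              rw [Finset.mem_filter, Finset.mem_range, Finset.mem_Ico] at ht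
              rw [Finset.mem_Icc]
              omega
          _ = τ + 1 := by rw [Nat.card_Icc]; omega
    have hsplit : ∑ t ∈ Finset.range T, (2 * (2 + ρ) ^ 2 * a t + 8 * L ^ 2 * ((τ:ℝ) + 1) * Q' t)
        = 2 * (2 + ρ) ^ 2 * (∑ t ∈ Finset.range T, a t)
          + 8 * L ^ 2 * ((τ:ℝ) + 1) * (∑ t ∈ Finset.range T, Q' t) := by
      rw [Finset.sum_add_distrib, ← Finset.mul_sum, ← Finset.mul_sum]
    have hc : 0 ≤ 8 * L ^ 2 * ((τ:ℝ) + 1) := by positivity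
    have h8 := mul_le_mul_of_nonneg_left hwin' hc
    have hsum1 : (0:ℝ) ≤ ∑ t ∈ Finset.range T, a t := Finset.sum_nonneg fun s _ => hanneg s
    rw [hμdef]
    clear_value Q' a gap
    linarith only [hs, hsplit, h8]
  -- conclusion, part 1
  have part1 : ∀ T : ℕ, (∀ t, t < T → ε ≤ gap t ^ 2) → (T : ℝ) * ε ≤ μ / cc * (F0 - Llo) := by
    intro T hT
    have h1 : (T : ℝ) * ε ≤ ∑ t ∈ Finset.range T, gap t ^ 2 := by
      calc (T : ℝ) * ε = ∑ _t ∈ Finset.range T, ε := by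
            rw [Finset.sum_const, Finset.card_range, nsmul_eq_mul]
        _ ≤ ∑ t ∈ Finset.range T, gap t ^ 2 :=
            Finset.sum_le_sum fun t ht => hT t (Finset.mem_range.mp ht)
    have h2 := hK7 T
    have h3 := hK5 T
    have hμc : μ * ∑ s ∈ Finset.range T, a s ≤ μ / cc * (F0 - Llo) := by
      rw [div_mul_eq_mul_div, le_div_iff₀ hcc]
      calc μ * (∑ s ∈ Finset.range T, a s) * cc = μ * (cc * ∑ s ∈ Finset.range T, a s) := by
            ring
        _ ≤ μ * (F0 - Llo) := mul_le_mul_of_nonneg_left h3 hμpos.le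
    clear_value μ cc F0 a gap
    linarith only [h1, h2, hμc]
  have hbound0 : 0 ≤ μ / cc * (F0 - Llo) := by
    have := part1 0 (by intro t ht; exact absurd ht (Nat.not_lt_zero t))
    simpa using this
  constructor
  · intro T hT
    exact part1 T hT
  · have hseteq : {t : ℕ | ‖(x t - prox (x t - (m : ℝ)⁻¹ • (∑ j, gradient (Lf j) (x t))))‖ ^ 2 < ε}
        = {t : ℕ | gap t ^ 2 < ε} := rfl
    rw [hseteq]
    rcases Set.eq_empty_or_nonempty {t : ℕ | gap t ^ 2 < ε} with he | hne
    · rw [he, Nat.sInf_empty]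
      have : 0 ≤ μ / cc * (F0 - Llo) / ε := div_nonneg hbound0 hε.le
      push_cast
      linarith
    · set N := sInf {t : ℕ | gap t ^ 2 < ε} with hN
      have hlt : ∀ t, t < N → ε ≤ gap t ^ 2 := by
        intro t ht
        by_contra hcon
        push_neg at hcon
        exact Nat.notMem_of_lt_sInf ht hcon
      have h1 := part1 N hlt
      have h2 : (N : ℝ) ≤ μ / cc * (F0 - Llo) / ε := (le_div_iff₀ hε).mpr h1
      linarith
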